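/- If S is an additive numerical semigroup with multiplicity e whose blowup B is symmetric, then d_max(S) = d(F(B) + e; D), the denumerant of F(B) + e in B with respect to the generating set D = {e, a₁−e, …, a_t−e}. -/

import Mathlib

open Finset

/-- The set of factorizations of `n` over the generating tuple `g`. -/
def Fac {t : ℕ} (g : Fin (t + 1) → ℕ) (n : ℕ) : Set (Fin (t + 1) → ℕ) :=
  {c | ∑ i, c i * g i = n}

/-- The numerical semigroup generated by the tuple `g`. -/
def Sg {t : ℕ} (g : Fin (t + 1) → ℕ) : Set ℕ :=
  {n | ∃ c : Fin (t + 1) → ℕ, ∑ i, c i * g i = n}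

/-- The order of `n`: the maximal length of a factorization of `n` over `g`. -/
noncomputable def ordOf {t : ℕ} (g : Fin (t + 1) → ℕ) (n : ℕ) : ℕ :=
  sSup {r | ∃ c ∈ Fac g n, ∑ i, c i = r}

/-- The minimal length of a factorization of `n` over `g`. -/
noncomputable def minordOf {t : ℕ} (g : Fin (t + 1) → ℕ) (n : ℕ) : ℕ :=
  sInf {r | ∃ c ∈ Fac g n, ∑ i, c i = r}

/-- The denumerant of `n` with respect to `g`. -/
noncomputable def denum {t : ℕ} (g : Fin (t + 1) → ℕ) (n : ℕ) : ℕ :=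
  (Fac g n).ncard

/-- The maximal denumerant of an element: the number of maximal-length factorizations. -/
noncomputable def dmaxEl {t : ℕ} (g : Fin (t + 1) → ℕ) (n : ℕ) : ℕ :=
  {c ∈ Fac g n | ∑ i, c i = ordOf g n}.ncard

/-- The maximal denumerant of the semigroup generated by `g`. -/
noncomputable def dmax {t : ℕ} (g : Fin (t + 1) → ℕ) : ℕ :=
  sSup {m | ∃ n ∈ Sg g, dmaxEl g n = m}

/-- The generating tuple `D` of the blowup: `{e, a₁ - e, …, a_t - e}`. -/
def blowD {t : ℕ} (g : Fin (t + 1) → ℕ) : Fin (t + 1) → ℕ :=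
  fun i => if i = 0 then g 0 else g i - g 0

/-- The adjustment of `n`:  `n - ord(n) * e`. -/
noncomputable def adj {t : ℕ} (g : Fin (t + 1) → ℕ) (n : ℕ) : ℕ :=
  n - ordOf g n * g 0

/-- The Apery set with respect to `u` of the semigroup generated by `g`. -/
def Ap {t : ℕ} (g : Fin (t + 1) → ℕ) (u : ℕ) : Set ℕ :=
  {w ∈ Sg g | ¬ ∃ b ∈ Sg g, w = b + u}

/-- `g` is the (strictly increasing) minimal generating tuple of a numerical semigroup
with multiplicity `g 0`. -/
structure IsNumSgp {t : ℕ} (g : Fin (t + 1) → ℕ) : Prop where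
  mono : StrictMono g
  pos : 0 < g 0
  gcd_eq_one : Finset.gcd Finset.univ g = 1
  minimal : ∀ i, ∀ c : Fin (t + 1) → ℕ, ∑ j, c j * g j = g i → c = Pi.single i 1

/-- `S` is additive: `ord(u + e) = ord(u) + 1` for all `u ∈ S`. -/
def IsAdditive {t : ℕ} (g : Fin (t + 1) → ℕ) : Prop :=
  ∀ u ∈ Sg g, ordOf g (u + g 0) = ordOf g u + 1

/-- Membership of an integer in a set of naturals. -/
def ZMem (T : Set ℕ) (z : ℤ) : Prop := 0 ≤ z ∧ z.toNat ∈ T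

/-- The Frobenius number: the largest integer not in `T`. -/
noncomputable def Frob (T : Set ℕ) : ℤ := sSup {z : ℤ | ¬ ZMem T z}

/-- `T` is symmetric: whenever `x + y = F(T)`, exactly one of `x`, `y` lies in `T`. -/
def Symm (T : Set ℕ) : Prop := ∀ x y : ℤ, x + y = Frob T → (ZMem T x ↔ ¬ ZMem T y)

/-- An abstract numerical semigroup. -/
structure IsNumSemigroup (T : Set ℕ) : Prop where
  zero_mem : 0 ∈ T
  add_mem : ∀ a ∈ T, ∀ b ∈ T, a + b ∈ T
  cofinite : Tᶜ.Finite

/-- The Apery set of an abstract numerical semigroup. -/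
def ApS (T : Set ℕ) (u : ℕ) : Set ℕ := {w ∈ T | ¬ ∃ b ∈ T, w = b + u}
section AuxLemmas

variable {t : ℕ}

/-- Key identity: factorization over `g` splits into length times `g 0` plus residue. -/
lemma sum_split (g : Fin (t + 1) → ℕ) (hm : Monotone g) (c : Fin (t + 1) → ℕ) :
    ∑ i, c i * g i = (∑ i, c i) * g 0 + ∑ i, c i * (g i - g 0) := by
  rw [Finset.sum_mul, ← Finset.sum_add_distrib]
  refine Finset.sum_congr rfl fun i _ => ?_
  have h : g 0 ≤ g i := hm (Fin.zero_le i)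
  rw [← Nat.mul_add, Nat.add_sub_cancel' h]

lemma blow_split (g : Fin (t + 1) → ℕ) (c : Fin (t + 1) → ℕ) :
    ∑ i, c i * blowD g i = c 0 * g 0 + ∑ i, c i * (g i - g 0) := by
  rw [Fin.sum_univ_succ, Fin.sum_univ_succ (f := fun i => c i * (g i - g 0))]
  simp [blowD, Fin.succ_ne_zero]

lemma Sg_add {g : Fin (t + 1) → ℕ} {a b : ℕ} (ha : a ∈ Sg g) (hb : b ∈ Sg g) :
    a + b ∈ Sg g := by
  obtain ⟨c, hc⟩ := ha; obtain ⟨d, hd⟩ := hb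
  exact ⟨c + d, by simp [add_mul, Finset.sum_add_distrib, hc, hd]⟩

lemma Sg_gen (g : Fin (t + 1) → ℕ) (i : Fin (t + 1)) : g i ∈ Sg g := by
  refine ⟨Pi.single i 1, ?_⟩
  simp [Pi.single_apply, Finset.sum_ite_eq']

lemma Sg_smul (g : Fin (t + 1) → ℕ) (k : ℕ) {a : ℕ} (ha : a ∈ Sg g) : k * a ∈ Sg g := by
  obtain ⟨c, hc⟩ := ha
  exact ⟨fun i => k * c i, by rw [← hc, Finset.mul_sum]; simp [mul_assoc]⟩

lemma Sg_zero (g : Fin (t + 1) → ℕ) : 0 ∈ Sg g := ⟨0, by simp⟩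

end AuxLemmas
section Aux2
variable {t : ℕ}

lemma len_le {g : Fin (t + 1) → ℕ} (hg : ∀ i, 1 ≤ g i) {n : ℕ} {c : Fin (t + 1) → ℕ}
    (hc : c ∈ Fac g n) : ∑ i, c i ≤ n := by
  calc ∑ i, c i ≤ ∑ i, c i * g i :=
        Finset.sum_le_sum fun i _ => Nat.le_mul_of_pos_right _ (hg i)
    _ = n := hc

lemma ord_spec {g : Fin (t + 1) → ℕ} (hg : ∀ i, 1 ≤ g i) {n : ℕ} (hn : n ∈ Sg g) :
    (∃ c ∈ Fac g n, ∑ i, c i = ordOf g n) ∧ ∀ c ∈ Fac g n, ∑ i, c i ≤ ordOf g n := by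
  obtain ⟨c, hc⟩ := hn
  have hne : {r | ∃ c ∈ Fac g n, ∑ i, c i = r}.Nonempty := ⟨∑ i, c i, c, hc, rfl⟩
  have hbdd : BddAbove {r | ∃ c ∈ Fac g n, ∑ i, c i = r} := by
    refine ⟨n, fun r hr => ?_⟩
    obtain ⟨d, hd, rfl⟩ := hr
    exact len_le hg hd
  exact ⟨Nat.sSup_mem hne hbdd, fun d hd => le_csSup hbdd ⟨d, hd, rfl⟩⟩

lemma ord_pump {g : Fin (t + 1) → ℕ} (hadd : IsAdditive g) {n : ℕ} (hn : n ∈ Sg g) (K : ℕ) :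
    ordOf g (n + K * g 0) = ordOf g n + K := by
  induction K with
  | zero => simp
  | succ k ih =>
    have hmem : n + k * g 0 ∈ Sg g := Sg_add hn (Sg_smul g k (Sg_gen g 0))
    have := hadd _ hmem
    have harr : n + (k + 1) * g 0 = n + k * g 0 + g 0 := by ring
    rw [harr, this, ih]
    ring

lemma fac_finite {g : Fin (t + 1) → ℕ} (hg : ∀ i, 1 ≤ g i) (n : ℕ) : (Fac g n).Finite := by
  refine (Set.Finite.pi (fun i : Fin (t+1) => Set.finite_Iic n)).subset ?_
  intro c hc
  rw [Set.mem_pi]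
  intro i _
  have h1 : c i * g i ≤ n := hc ▸ Finset.single_le_sum (f := fun j => c j * g j)
    (fun j _ => Nat.zero_le _) (Finset.mem_univ i)
  have : c i ≤ c i * g i := Nat.le_mul_of_pos_right _ (hg i)
  exact Set.mem_Iic.2 (le_trans this h1)

lemma bezout {ι : Type*} [DecidableEq ι] (s : Finset ι) (f : ι → ℕ) :
    ∃ c : ι → ℤ, ∑ i ∈ s, c i * (f i : ℤ) = ((s.gcd f : ℕ) : ℤ) := by
  classical
  induction s using Finset.induction_on with
  | empty => exact ⟨0, by simp⟩
  | @insert a s ha ih =>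
    obtain ⟨c, hc⟩ := ih
    refine ⟨fun i => if i = a then Nat.gcdA (f a) (s.gcd f) else Nat.gcdB (f a) (s.gcd f) * c i, ?_⟩
    rw [Finset.sum_insert ha, Finset.gcd_insert]
    have h1 : ∀ i ∈ s,
        (if i = a then Nat.gcdA (f a) (s.gcd f) else Nat.gcdB (f a) (s.gcd f) * c i) * (f i : ℤ)
        = Nat.gcdB (f a) (s.gcd f) * (c i * (f i : ℤ)) := by
      intro i hi
      rw [if_neg (by rintro rfl; exact ha hi)]
      ring
    rw [Finset.sum_congr rfl h1, ← Finset.mul_sum, hc]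
    beta_reduce
    rw [if_pos rfl]
    have hg : (GCDMonoid.gcd (f a) (s.gcd f) : ℕ) = Nat.gcd (f a) (s.gcd f) := rfl
    rw [hg]
    rw [Nat.gcd_eq_gcd_ab (f a) (s.gcd f)]
    ring

lemma exists_bound {g : Fin (t + 1) → ℕ} (hgcd : Finset.gcd Finset.univ g = 1) :
    ∃ N : ℕ, ∀ n, N ≤ n → n ∈ Sg g := by
  obtain ⟨x, hx⟩ := bezout Finset.univ g
  rw [hgcd] at hx
  set P : ℕ := ∑ i, (x i).toNat * g i with hP
  set Q : ℕ := ∑ i, (-(x i)).toNat * g i with hQ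
  have hPQ : (P : ℤ) = (Q : ℤ) + 1 := by
    rw [hP, hQ]
    push_cast
    have : ∀ i ∈ Finset.univ (α := Fin (t+1)),
        ((x i).toNat : ℤ) * g i - ((-(x i)).toNat : ℤ) * g i = x i * g i := by
      intro i _
      have := Int.toNat_sub_toNat_neg (x i)
      nlinarith [Int.toNat_sub_toNat_neg (x i)]
    have h2 : ∑ i : Fin (t+1), (((x i).toNat : ℤ) * g i - ((-(x i)).toNat : ℤ) * g i) = 1 := by
      rw [Finset.sum_congr rfl this, hx]; norm_num
    rw [Finset.sum_sub_distrib] at h2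
    omega
  have hPmem : P ∈ Sg g := ⟨fun i => (x i).toNat, rfl⟩
  have hQmem : Q ∈ Sg g := ⟨fun i => (-(x i)).toNat, rfl⟩
  have hPQn : P = Q + 1 := by exact_mod_cast hPQ
  refine ⟨Q * Q, fun n hn => ?_⟩
  rcases Nat.eq_zero_or_pos Q with hQ0 | hQpos
  · have h1 : P = 1 := by omega
    have : n = n * P := by rw [h1]; ring
    rw [this]
    exact Sg_smul g n hPmem
  · set q := n / Q with hq
    set r := n % Q with hr
    have hrQ : r < Q := Nat.mod_lt _ hQpos
    have hqQ : Q ≤ q := (Nat.le_div_iff_mul_le hQpos).2 hn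
    have hrq : r ≤ q := le_trans (le_of_lt hrQ) hqQ
    have hneq : n = (q - r) * Q + r * P := by
      have h2 : q - r + r = q := Nat.sub_add_cancel hrq
      calc n = Q * q + r := (Nat.div_add_mod n Q).symm
        _ = Q * ((q - r) + r) + r := by rw [h2]
        _ = (q - r) * Q + r * (Q + 1) := by ring
        _ = (q - r) * Q + r * P := by rw [hPQn]
    rw [hneq]
    exact Sg_add (Sg_smul g _ hQmem) (Sg_smul g _ hPmem)

end Aux2
section Aux3
variable {t : ℕ}

/-- Zero out the first coordinate. -/
def psi {t : ℕ} (c : Fin (t + 1) → ℕ) : Fin (t + 1) → ℕ := fun i => if i = 0 then 0 else c i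

lemma psi_sum (g : Fin (t + 1) → ℕ) (c : Fin (t + 1) → ℕ) :
    ∑ i, psi c i * blowD g i = ∑ i, c i * (g i - g 0) := by
  rw [blow_split]
  have h0 : psi c 0 = 0 := rfl
  rw [h0]
  simp only [zero_mul, zero_add]
  refine Finset.sum_congr rfl fun i _ => ?_
  rcases eq_or_ne i 0 with rfl | h
  · simp [psi]
  · simp [psi, h]

lemma psi_sum_len (c : Fin (t + 1) → ℕ) : ∑ i, psi c i + c 0 = ∑ i, c i := by
  rw [Fin.sum_univ_succ (f := psi c), Fin.sum_univ_succ (f := c)]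
  have h0 : psi c 0 = 0 := rfl
  have hs : ∀ i : Fin t, psi c i.succ = c i.succ := fun i => by
    simp [psi, Fin.succ_ne_zero]
  rw [h0, Finset.sum_congr rfl fun i _ => hs i]
  omega

/-- Lift a `blowD`-factorization with zero first coordinate to a `g`-factorization. -/
def toG {t : ℕ} (m : ℕ) (b : Fin (t + 1) → ℕ) : Fin (t + 1) → ℕ :=
  fun i => if i = 0 then m - ∑ j, b j else b i

lemma toG_spec (g : Fin (t + 1) → ℕ) (hm : Monotone g) {w m : ℕ} (b : Fin (t + 1) → ℕ)
    (hb : ∑ i, b i * blowD g i = w) (hb0 : b 0 = 0) (hle : ∑ i, b i ≤ m) :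
    (∑ i, toG m b i * g i = m * g 0 + w) ∧ (∑ i, toG m b i = m) ∧ psi (toG m b) = psi b := by
  have hpsi : psi (toG m b) = psi b := by
    funext i
    rcases eq_or_ne i 0 with rfl | h
    · rfl
    · simp [psi, toG, h]
  have hlen : ∑ i, toG m b i = m := by
    have h1 := psi_sum_len (toG m b)
    have h2 := psi_sum_len b
    have h3 : toG m b 0 = m - ∑ j, b j := rfl
    have h4 : ∑ i, psi (toG m b) i = ∑ i, psi b i := by rw [hpsi]
    omega
  refine ⟨?_, hlen, hpsi⟩
  rw [sum_split g hm, hlen]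
  congr 1
  have h5 : ∑ i, toG m b i * (g i - g 0) = ∑ i, b i * (g i - g 0) := by
    refine Finset.sum_congr rfl fun i _ => ?_
    rcases eq_or_ne i 0 with rfl | h
    · simp
    · simp [toG, h]
  rw [h5]
  rw [blow_split, hb0] at hb
  simpa using hb

end Aux3
set_option maxHeartbeats 2000000 in

/-- Corollary 4.10: if `S` is additive with symmetric blowup `B`, then
`d_max(S) = d(F(B) + e; D)`. -/
theorem stmt14 {t : ℕ} (g : Fin (t + 1) → ℕ) (hS : IsNumSgp g) (hadd : IsAdditive g)
    (hsym : Symm (Sg (blowD g))) :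
    dmax g = denum (blowD g) (Frob (Sg (blowD g)) + g 0).toNat := by
  classical
  have he : 0 < g 0 := hS.pos
  have hmono : Monotone g := hS.mono.monotone
  have hg1 : ∀ i, 1 ≤ g i := fun i => le_trans he (hmono (Fin.zero_le i))
  have hD1 : ∀ i, 1 ≤ blowD g i := by
    intro i
    rcases eq_or_ne i 0 with rfl | h
    · unfold blowD; rw [if_pos rfl]; omega
    · have h2 : g 0 < g i := hS.mono (Fin.pos_of_ne_zero h)
      simp only [blowD, if_neg h]
      omega
  have hgcdD : Finset.gcd Finset.univ (blowD g) = 1 := by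
    have hdvd : Finset.gcd Finset.univ (blowD g) ∣ Finset.gcd Finset.univ g := by
      refine Finset.dvd_gcd fun i _ => ?_
      have h0 : Finset.gcd Finset.univ (blowD g) ∣ blowD g 0 := Finset.gcd_dvd (Finset.mem_univ _)
      have hi : Finset.gcd Finset.univ (blowD g) ∣ blowD g i := Finset.gcd_dvd (Finset.mem_univ _)
      rcases eq_or_ne i 0 with rfl | h
      · simpa [blowD] using h0
      · have hgi : g i = g 0 + (g i - g 0) := by
          have : g 0 ≤ g i := hmono (Fin.zero_le i); omega
        rw [hgi]
        exact dvd_add (by simpa [blowD] using h0) (by simpa [blowD, h] using hi)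
    rw [hS.gcd_eq_one] at hdvd
    exact Nat.dvd_one.mp hdvd
  obtain ⟨Nb, hNb⟩ := exists_bound hgcdD
  set B := Sg (blowD g) with hB
  set f := Frob B with hf
  have hGne : {z : ℤ | ¬ ZMem B z}.Nonempty := ⟨-1, fun h => by have := h.1; omega⟩
  have hGbdd : BddAbove {z : ℤ | ¬ ZMem B z} := by
    refine ⟨Nb, fun z hz => ?_⟩
    by_contra h
    push_neg at h
    exact hz ⟨by omega, hNb _ (by omega)⟩
  have hfgap : ¬ ZMem B f := Int.csSup_mem hGne hGbdd
  have hfub : ∀ z : ℤ, ¬ ZMem B z → z ≤ f := fun z hz => le_csSup hGbdd hz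
  have hfneg : -1 ≤ f := hfub _ (fun h => by have := h.1; omega)
  set Fn := (f + (g 0 : ℤ)).toNat with hFndef
  have hFz : (Fn : ℤ) = f + g 0 := by rw [hFndef]; omega
  have hFmem : Fn ∈ B := by
    by_contra hcon
    have h1 : ¬ ZMem B (Fn : ℤ) := by
      rintro ⟨-, h2⟩
      rw [Int.toNat_natCast] at h2
      exact hcon h2
    have := hfub _ h1
    omega
  -- every factorization of Fn over blowD g has zero first coordinate
  have hball : ∀ b ∈ Fac (blowD g) Fn, b 0 = 0 := by
    intro b hb
    by_contra h0
    have hsum : b 0 * g 0 + ∑ i, b i * (g i - g 0) = Fn := by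
      rw [← blow_split]; exact hb
    obtain ⟨k, hk⟩ : ∃ k, b 0 = k + 1 := ⟨b 0 - 1, by omega⟩
    set S := ∑ i, b i * (g i - g 0) with hSdef
    have hFeq : Fn = k * g 0 + g 0 + S := by rw [← hsum, hk]; ring
    set b' : Fin (t + 1) → ℕ := fun i => if i = 0 then k else b i with hb'def
    have hb'sum : ∑ i, b' i * blowD g i = k * g 0 + S := by
      rw [blow_split]
      have h1 : b' 0 = k := rfl
      have h2 : ∑ i, b' i * (g i - g 0) = S := by
        rw [hSdef]
        refine Finset.sum_congr rfl fun i _ => ?_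
        rcases eq_or_ne i 0 with rfl | h
        · simp
        · simp [hb'def, h]
      rw [h1, h2]
    have hFeqz : (Fn : ℤ) = (k : ℤ) * g 0 + g 0 + S := by exact_mod_cast congrArg (Nat.cast : ℕ → ℤ) hFeq
    have hf0 : (0 : ℤ) ≤ f := by
      have hk0 : (0:ℤ) ≤ (k:ℤ) * g 0 := by positivity
      have hS0 : (0:ℤ) ≤ (S:ℤ) := by positivity
      linarith [hFz, hFeqz]
    have hZ : ZMem B f := by
      refine ⟨hf0, ?_⟩
      have h3 : f.toNat = k * g 0 + S := by
        have h4 : (f.toNat : ℤ) = (k : ℤ) * g 0 + S := by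
          rw [Int.toNat_of_nonneg hf0]
          linarith [hFz, hFeqz]
        exact_mod_cast h4
      rw [h3]
      exact ⟨b', hb'sum⟩
    exact hfgap hZ
  -- Part A: a witness element n₀ with dmaxEl g n₀ = denum (blowD g) Fn
  obtain ⟨b₀, hb₀⟩ := hFmem
  have hb₀0 : b₀ 0 = 0 := hball _ hb₀
  have hb₀len : ∑ i, b₀ i ≤ Fn := len_le hD1 hb₀
  obtain ⟨hc₀sum, hc₀len, -⟩ := toG_spec g hmono b₀ hb₀ hb₀0 hb₀len
  set n₀ := Fn * g 0 + Fn with hn₀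
  have hn₀mem : n₀ ∈ Sg g := ⟨toG Fn b₀, hc₀sum⟩
  have hordn₀ : ordOf g n₀ = Fn := by
    obtain ⟨⟨cm, hcm, hcmlen⟩, hubn⟩ := ord_spec hg1 hn₀mem
    have h1 : Fn ≤ ordOf g n₀ := hc₀len ▸ hubn _ hc₀sum
    by_contra hne
    have h2 : Fn + 1 ≤ ordOf g n₀ := by omega
    obtain ⟨k, hk⟩ : ∃ k, ordOf g n₀ = Fn + 1 + k := ⟨ordOf g n₀ - Fn - 1, by omega⟩
    set S' := ∑ i, cm i * (g i - g 0) with hS'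
    have hsplit : n₀ = (Fn + 1 + k) * g 0 + S' := by
      rw [← hcm]
      show (∑ i, cm i * g i : ℕ) = _
      rw [sum_split g hmono, hcmlen, hk]
    set b'' : Fin (t + 1) → ℕ := fun i => if i = 0 then k else cm i with hb''
    have hb''sum : ∑ i, b'' i * blowD g i = k * g 0 + S' := by
      rw [blow_split]
      have h3 : b'' 0 = k := rfl
      have h4 : ∑ i, b'' i * (g i - g 0) = S' := by
        rw [hS']
        refine Finset.sum_congr rfl fun i _ => ?_
        rcases eq_or_ne i 0 with rfl | h
        · simp
        · simp [hb'', h]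
      rw [h3, h4]
    have hsplz : ((n₀ : ℕ) : ℤ) = ((Fn : ℤ) + 1 + k) * g 0 + S' := by exact_mod_cast congrArg (Nat.cast : ℕ → ℤ) hsplit
    have hn₀z : ((n₀ : ℕ) : ℤ) = (Fn : ℤ) * g 0 + Fn := by rw [hn₀]; push_cast; ring
    have hfval : f = (k : ℤ) * g 0 + S' := by
      have := hFz
      nlinarith [hsplz, hn₀z]
    have hf0 : (0 : ℤ) ≤ f := by
      have hk0 : (0:ℤ) ≤ (k:ℤ) * g 0 := by positivity
      have hS0 : (0:ℤ) ≤ (S':ℤ) := by positivity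
      linarith
    refine hfgap ⟨hf0, ?_⟩
    have h5 : f.toNat = k * g 0 + S' := by
      have h6 : (f.toNat : ℤ) = (k : ℤ) * g 0 + S' := by
        rw [Int.toNat_of_nonneg hf0]; exact hfval
      exact_mod_cast h6
    rw [h5]
    exact ⟨b'', hb''sum⟩
  have hAmax : dmaxEl g n₀ = denum (blowD g) Fn := by
    show {c ∈ Fac g n₀ | ∑ i, c i = ordOf g n₀}.ncard = (Fac (blowD g) Fn).ncard
    have himg : psi '' {c ∈ Fac g n₀ | ∑ i, c i = ordOf g n₀} = Fac (blowD g) Fn := by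
      ext b
      constructor
      · rintro ⟨c, ⟨hcF, hclen⟩, rfl⟩
        rw [hordn₀] at hclen
        show ∑ i, psi c i * blowD g i = Fn
        rw [psi_sum]
        have h1 : (∑ i, c i * g i : ℕ) = Fn * g 0 + ∑ i, c i * (g i - g 0) := by
          rw [sum_split g hmono, hclen]
        have h2 : Fn * g 0 + ∑ i, c i * (g i - g 0) = Fn * g 0 + Fn := by
          rw [← h1, hcF]
        exact Nat.add_left_cancel h2
      · intro hbF
        have hb0' : b 0 = 0 := hball _ hbF
        have hblen : ∑ i, b i ≤ Fn := len_le hD1 hbF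
        obtain ⟨hs1, hs2, hs3⟩ := toG_spec g hmono b hbF hb0' hblen
        refine ⟨toG Fn b, ⟨hs1.trans rfl, by rw [hordn₀]; exact hs2⟩, ?_⟩
        rw [hs3]
        funext i
        rcases eq_or_ne i 0 with rfl | h
        · simp [psi, hb0']
        · simp [psi, h]
    have hinj : Set.InjOn psi {c ∈ Fac g n₀ | ∑ i, c i = ordOf g n₀} := by
      rintro c ⟨hc1, hc2⟩ c' ⟨hc1', hc2'⟩ hcc
      funext i
      rcases eq_or_ne i 0 with rfl | h
      · have h1 := psi_sum_len c
        have h2 := psi_sum_len c'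
        have h3 : ∑ i, psi c i = ∑ i, psi c' i := by rw [hcc]
        omega
      · have := congrFun hcc i
        simpa [psi, h] using this
    rw [← himg, Set.ncard_image_of_injOn hinj]
  -- Part B: upper bound
  have hub : ∀ n ∈ Sg g, dmaxEl g n ≤ denum (blowD g) Fn := by
    intro n hn
    obtain ⟨⟨c₀, hc₀, hc₀l⟩, hubn⟩ := ord_spec hg1 hn
    set m := ordOf g n with hm
    set S₀ := ∑ i, c₀ i * (g i - g 0) with hS₀
    have hnsplit : n = m * g 0 + S₀ := by
      rw [← hc₀]
      show (∑ i, c₀ i * g i : ℕ) = _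
      rw [sum_split g hmono, hc₀l]
    have hgap2 : ¬ ZMem B ((S₀ : ℤ) - g 0) := by
      rintro ⟨h1, h2⟩
      obtain ⟨b, hbmem⟩ := h2
      set W := ((S₀ : ℤ) - g 0).toNat with hW
      have hWval : S₀ = W + g 0 := by omega
      have hbsplit : b 0 * g 0 + ∑ i, b i * (g i - g 0) = W := by
        rw [← blow_split]; exact hbmem
      set K := ∑ i, b i with hK
      have hpump := ord_pump hadd hn K
      set Sb := ∑ i, b i * (g i - g 0) with hSb
      have hle2 : ∑ i, psi b i ≤ m + K + 1 + b 0 := by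
        have := psi_sum_len b; omega
      have hpb0 : psi b 0 = 0 := rfl
      obtain ⟨hg1s, hg2s, -⟩ := toG_spec g hmono (psi b) (psi_sum g b) hpb0 hle2
      have hkey : (m + K + 1 + b 0) * g 0 + Sb = n + K * g 0 := by
        have h5 : (((m + K + 1 + b 0) * g 0 + Sb : ℕ) : ℤ) = ((n + K * g 0 : ℕ) : ℤ) := by
          push_cast
          have e1 : (n : ℤ) = (m : ℤ) * g 0 + S₀ := by exact_mod_cast congrArg (Nat.cast : ℕ → ℤ) hnsplit
          have e2 : (S₀ : ℤ) = (W : ℤ) + g 0 := by exact_mod_cast congrArg (Nat.cast : ℕ → ℤ) hWval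
          have e3 : ((b 0 : ℕ) : ℤ) * g 0 + Sb = W := by exact_mod_cast congrArg (Nat.cast : ℕ → ℤ) hbsplit
          nlinarith [e1, e2, e3]
        exact_mod_cast h5
      rw [hkey] at hg1s
      have hcontra := (ord_spec hg1 (Sg_add hn (Sg_smul g K (Sg_gen g 0)))).2 _ hg1s
      rw [hpump, hg2s] at hcontra
      omega
    have hWs : ZMem B (f + (g 0 : ℤ) - S₀) := (hsym _ _ (by ring)).mpr hgap2
    obtain ⟨hW1, hW2⟩ := hWs
    obtain ⟨bw, hbw⟩ := hW2
    have hWF : S₀ + (f + (g 0 : ℤ) - S₀).toNat = Fn := by omega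
    show {c ∈ Fac g n | ∑ i, c i = ordOf g n}.ncard ≤ (Fac (blowD g) Fn).ncard
    have hmaps : ∀ c ∈ {c ∈ Fac g n | ∑ i, c i = ordOf g n}, (fun i => psi c i + bw i) ∈ Fac (blowD g) Fn := by
      rintro c ⟨hcF, hclen⟩
      show ∑ i, (psi c i + bw i) * blowD g i = Fn
      rw [Finset.sum_congr rfl (fun i _ => add_mul (psi c i) (bw i) (blowD g i)),
        Finset.sum_add_distrib, psi_sum, hbw]
      have h6 : ∑ i, c i * (g i - g 0) = S₀ := by
        have h7 : (∑ i, c i * g i : ℕ) = m * g 0 + ∑ i, c i * (g i - g 0) := by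
          rw [sum_split g hmono, hclen]
        have h8 : m * g 0 + ∑ i, c i * (g i - g 0) = m * g 0 + S₀ := by
          rw [← h7, hcF, hnsplit]
        exact Nat.add_left_cancel h8
      rw [h6, hWF]
    have hinj2 : Set.InjOn (fun c (i : Fin (t+1)) => psi c i + bw i)
        {c ∈ Fac g n | ∑ i, c i = ordOf g n} := by
      rintro c ⟨hc1, hc2⟩ c' ⟨hc1', hc2'⟩ hcc
      have hps : ∀ i, psi c i = psi c' i := fun i => by
        have := congrFun hcc i
        simpa using this
      funext i
      rcases eq_or_ne i 0 with rfl | h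
      · have h1 := psi_sum_len c
        have h2 := psi_sum_len c'
        have h3 : ∑ i, psi c i = ∑ i, psi c' i := Finset.sum_congr rfl fun i _ => hps i
        omega
      · have := hps i
        simpa [psi, h] using this
    exact Set.ncard_le_ncard_of_injOn _ hmaps hinj2 (fac_finite hD1 Fn)
  have hgreat : IsGreatest {m | ∃ n ∈ Sg g, dmaxEl g n = m} (denum (blowD g) Fn) :=
    ⟨⟨n₀, hn₀mem, hAmax⟩, by rintro x ⟨n, hn, rfl⟩; exact hub n hn⟩
  show sSup {m | ∃ n ∈ Sg g, dmaxEl g n = m} = denum (blowD g) Fn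
  exact hgreat.csSup_eq
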